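/- Let M₀ ∈ ℝ and let w be twice continuously differentiable on the open strip Π = ℝ × (M₀, ∞), satisfying Δw + k²w = 0 on Π and w(x+L, y) = ν w(x,y) for all (x,y) ∈ Π, and assume ∫_{(0,L)×(M₀,∞)} |w(x,y)|² dx dy < ∞. For j ∈ ℤ define w_j(y) = ∫₀^L w(x,y) \overline{φ_j(x)} dx. Then for every j ∈ J (i.e. every j with λ_j² < k²), w_j(y) = 0 for all y > M₀: all propagating modes of a square-integrable quasiperiodic solution vanish. -/

import Mathlib

open MeasureTheory Set

section Aux

lemma contX {M₀ : ℝ} (W : ℝ → ℝ → ℂ)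
    (hWc : ContinuousOn (fun p : ℝ × ℝ => W p.1 p.2) {p : ℝ × ℝ | M₀ < p.2})
    {s : ℝ} (hs : M₀ < s) : Continuous (fun x => W x s) := by
  have hopen : IsOpen {p : ℝ × ℝ | M₀ < p.2} := isOpen_lt continuous_const continuous_snd
  rw [continuous_iff_continuousAt]
  intro x
  have h1 : ContinuousAt (fun p : ℝ × ℝ => W p.1 p.2) (x, s) :=
    hWc.continuousAt (hopen.mem_nhds (by simpa using hs))
  have h2 : ContinuousAt (fun x : ℝ => ((x, s) : ℝ × ℝ)) x := by fun_prop
  exact ContinuousAt.comp (f := fun x : ℝ => ((x, s) : ℝ × ℝ))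
    (g := fun p : ℝ × ℝ => W p.1 p.2) h1 h2

lemma paramDeriv {M₀ L : ℝ} (hL : 0 < L) (W W' : ℝ → ℝ → ℂ)
    (hWc : ContinuousOn (fun p : ℝ × ℝ => W p.1 p.2) {p : ℝ × ℝ | M₀ < p.2})
    (hW'c : ContinuousOn (fun p : ℝ × ℝ => W' p.1 p.2) {p : ℝ × ℝ | M₀ < p.2})
    (hW : ∀ x y : ℝ, M₀ < y → HasDerivAt (fun t => W x t) (W' x y) y)
    (c : ℝ → ℂ) (hc : Continuous c) {y : ℝ} (hy : M₀ < y) :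
    HasDerivAt (fun s => ∫ x in (0:ℝ)..L, W x s * c x) (∫ x in (0:ℝ)..L, W' x y * c x) y := by
  set ε := (y - M₀) / 2 with hεdef
  have hε : 0 < ε := by simp [hεdef]; linarith
  have hKsub : (Icc (0:ℝ) L ×ˢ Icc (y - ε) (y + ε)) ⊆ {p : ℝ × ℝ | M₀ < p.2} := by
    rintro ⟨a, b⟩ ⟨_, hb⟩
    simp only [mem_setOf_eq]
    simp only [mem_Icc] at hb
    simp only [hεdef] at hb ⊢
    linarith [hb.1]
  have hK : IsCompact (Icc (0:ℝ) L ×ˢ Icc (y - ε) (y + ε)) := isCompact_Icc.prod isCompact_Icc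
  obtain ⟨C, hC⟩ := hK.exists_bound_of_continuousOn (hW'c.mono hKsub)
  obtain ⟨Cc, hCc⟩ := (isCompact_Icc : IsCompact (Icc (0:ℝ) L)).exists_bound_of_continuousOn
    hc.continuousOn
  have hCc0 : 0 ≤ Cc := le_trans (norm_nonneg _) (hCc 0 (by constructor <;> [rfl; exact hL.le]))
  have hball : ∀ s ∈ Metric.ball y ε, M₀ < s := by
    intro s hs
    rw [Metric.mem_ball, Real.dist_eq, abs_lt] at hs
    simp only [hεdef] at hs ⊢; linarith [hs.1]
  have hmain := (intervalIntegral.hasDerivAt_integral_of_dominated_loc_of_deriv_le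
    (F := fun s x => W x s * c x) (F' := fun s x => W' x s * c x)
    (bound := fun _ => C * Cc) (μ := volume) (a := 0) (b := L) (x₀ := y) (Metric.ball_mem_nhds y hε)
    ?_ ?_ ?_ ?_ ?_ ?_).2
  · exact hmain
  · filter_upwards [Metric.ball_mem_nhds y hε] with s hs
    exact ((contX W hWc (hball s hs)).mul hc).aestronglyMeasurable.restrict
  · exact ((contX W hWc hy).mul hc).intervalIntegrable 0 L
  · exact ((contX W' hW'c hy).mul hc).aestronglyMeasurable.restrict
  · refine MeasureTheory.ae_of_all _ (fun x hx s hs => ?_)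
    rw [Set.uIoc_of_le hL.le] at hx
    have hxI : x ∈ Icc (0:ℝ) L := ⟨hx.1.le, hx.2⟩
    have hsI : s ∈ Icc (y - ε) (y + ε) := by
      rw [Metric.mem_ball, Real.dist_eq, abs_lt] at hs
      constructor <;> linarith [hs.1, hs.2]
    calc ‖W' x s * c x‖ = ‖W' x s‖ * ‖c x‖ := norm_mul _ _
      _ ≤ C * Cc := mul_le_mul (hC (x, s) ⟨hxI, hsI⟩) (hCc x hxI) (norm_nonneg _)
          (le_trans (norm_nonneg _) (hC (x, s) ⟨hxI, hsI⟩))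
  · exact intervalIntegrable_const
  · refine MeasureTheory.ae_of_all _ (fun x hx s hs => ?_)
    exact (hW x s (hball s hs)).mul_const (c x)

lemma expDeriv (b : ℂ) (t : ℝ) :
    HasDerivAt (fun s : ℝ => Complex.exp (b * s)) (b * Complex.exp (b * t)) t := by
  have h1 : HasDerivAt (fun z : ℂ => Complex.exp (b * z)) (Complex.exp (b * t) * (b * 1)) t :=
    ((hasDerivAt_id ((t : ℝ) : ℂ)).const_mul b).cexp
  simpa [mul_comm] using h1.comp_ofReal

lemma constOn {M₀ : ℝ} (u : ℝ → ℂ) (hu : ∀ t, M₀ < t → HasDerivAt u 0 t)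
    {s t : ℝ} (hs : M₀ < s) (ht : M₀ < t) : u s = u t := by
  have key : ∀ a b : ℝ, M₀ < a → a ≤ b → u b = u a := by
    intro a b ha hab
    have hc : ContinuousOn u (Icc a b) := fun z hz =>
      (hu z (lt_of_lt_of_le ha hz.1)).continuousAt.continuousWithinAt
    exact constant_of_has_deriv_right_zero hc
      (fun z hz => (hu z (lt_of_lt_of_le ha hz.1)).hasDerivWithinAt) b ⟨hab, le_rfl⟩
  rcases le_total s t with h | h
  · exact (key s t hs h).symm
  · exact key t s ht h

end Aux

set_option maxHeartbeats 1000000 in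
theorem statement10
    (L k θ M₀ : ℝ) (hL : 0 < L) (hk : 0 < k) (hθ : θ ∈ Set.Ioo 0 (Real.pi / 2))
    (ν : ℂ) (hν : ν = Complex.exp (Complex.I * k * L * Real.cos θ))
    (lam : ℤ → ℝ) (hlam : ∀ j : ℤ, lam j = k * Real.cos θ + 2 * Real.pi * j / L)
    (hnr : ∀ j : ℤ, (lam j) ^ 2 ≠ k ^ 2)
    (φ : ℤ → ℝ → ℂ)
    (hφ : ∀ (j : ℤ) (x : ℝ), φ j x = Complex.exp (Complex.I * lam j * x) / Real.sqrt L)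
    (w w1 w2 w11 w22 : ℝ → ℝ → ℂ)
    (hcont : ∀ g ∈ ({w, w1, w2, w11, w22} : Set (ℝ → ℝ → ℂ)),
      ContinuousOn (fun p : ℝ × ℝ => g p.1 p.2) {p : ℝ × ℝ | M₀ < p.2})
    (hd1 : ∀ x y : ℝ, M₀ < y → HasDerivAt (fun t => w t y) (w1 x y) x)
    (hd2 : ∀ x y : ℝ, M₀ < y → HasDerivAt (fun t => w x t) (w2 x y) y)
    (hd11 : ∀ x y : ℝ, M₀ < y → HasDerivAt (fun t => w1 t y) (w11 x y) x)
    (hd22 : ∀ x y : ℝ, M₀ < y → HasDerivAt (fun t => w2 x t) (w22 x y) y)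
    (helm : ∀ x y : ℝ, M₀ < y → w11 x y + w22 x y + (k : ℂ) ^ 2 * w x y = 0)
    (hqp : ∀ x y : ℝ, M₀ < y → w (x + L) y = ν * w x y)
    (hL2 : IntegrableOn (fun p : ℝ × ℝ => ‖w p.1 p.2‖ ^ 2)
      (Set.Ioo (0 : ℝ) L ×ˢ Set.Ioi M₀) volume) :
    ∀ j : ℤ, (lam j) ^ 2 < k ^ 2 →
      ∀ y : ℝ, M₀ < y → (∫ x in (0 : ℝ)..L, w x y * (starRingEnd ℂ) (φ j x)) = 0 := by
  intro j hj
  -- basic continuity facts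
  have hwC := hcont w (by simp)
  have hw1C := hcont w1 (by simp)
  have hw2C := hcont w2 (by simp)
  have hw11C := hcont w11 (by simp)
  have hw22C := hcont w22 (by simp)
  have hsL : (0:ℝ) < Real.sqrt L := Real.sqrt_pos.2 hL
  set l : ℝ := lam j with hldef
  set β : ℝ := Real.sqrt (k ^ 2 - l ^ 2) with hβdef
  have hβ : 0 < β := Real.sqrt_pos.2 (by linarith)
  have hβ2 : β ^ 2 = k ^ 2 - l ^ 2 := Real.sq_sqrt (by linarith)
  set a : ℂ := -(Complex.I * l) with hadef
  set c : ℝ → ℂ := fun x => Complex.exp (a * x) / (Real.sqrt L : ℂ) with hcdef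
  have hcφ : ∀ x : ℝ, (starRingEnd ℂ) (φ j x) = c x := by
    intro x
    rw [hφ, hcdef, map_div₀, ← Complex.exp_conj]
    simp only [map_mul, Complex.conj_I, Complex.conj_ofReal, hadef]
    ring_nf
    rw [hldef]; ring_nf
  have hc_cont : Continuous c := by
    rw [hcdef]; fun_prop
  have hc_deriv : ∀ x : ℝ, HasDerivAt c (a * c x) x := by
    intro x
    have := (expDeriv a x).div_const (Real.sqrt L : ℂ)
    simpa [hcdef, mul_div_assoc] using this
  have hcnorm : ∀ x : ℝ, ‖c x‖ = 1 / Real.sqrt L := by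
    intro x
    have hre : (a * (x:ℂ)).re = 0 := by
      simp [hadef, Complex.mul_re]
    rw [hcdef]
    simp only [norm_div, Complex.norm_exp, hre, Real.exp_zero,
      Complex.norm_real, Real.norm_eq_abs, abs_of_pos hsL]
  have hνc : ν * Complex.exp (a * L) = 1 := by
    have hlL : l * L = k * Real.cos θ * L + 2 * Real.pi * j := by
      rw [hldef, hlam]; field_simp
    have h2 : ((l : ℂ) * (L : ℂ)) = (k : ℂ) * (Real.cos θ : ℂ) * (L : ℂ)
        + 2 * (Real.pi : ℂ) * (j : ℂ) := by
      exact_mod_cast congrArg (Complex.ofReal) hlL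
    have h1 : (Complex.I * k * L * Real.cos θ) + a * L
        = ((-j : ℤ) : ℂ) * (2 * (Real.pi : ℂ) * Complex.I) := by
      rw [hadef]
      have hj' : ((-j : ℤ) : ℂ) = -((j : ℤ) : ℂ) := by push_cast; ring
      rw [hj']
      linear_combination (-Complex.I) * h2
    rw [hν, ← Complex.exp_add, h1, Complex.exp_int_mul_two_pi_mul_I]
  have hcL : ν * c L = c 0 := by
    rw [hcdef]
    simp only []
    rw [mul_div_assoc', hνc]
    norm_num
  -- quasiperiodicity of w and w1 at the boundary
  have hqpw : ∀ y : ℝ, M₀ < y → w L y = ν * w 0 y := fun y hy => by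
    simpa using hqp 0 y hy
  have hqpw1 : ∀ y : ℝ, M₀ < y → w1 L y = ν * w1 0 y := by
    intro y hy
    have hadd : HasDerivAt (fun t : ℝ => t + L) 1 0 := (hasDerivAt_id (0:ℝ)).add_const L
    have h1 : HasDerivAt (fun t : ℝ => w (t + L) y) ((1:ℝ) • w1 (0 + L) y) 0 := by
      exact HasDerivAt.scomp (x := (0:ℝ)) (hd1 (0 + L) y hy) hadd
    have hfun : (fun t : ℝ => w (t + L) y) = fun t => ν * w t y :=
      funext fun t => hqp t y hy
    rw [hfun] at h1
    have h2 : HasDerivAt (fun t : ℝ => ν * w t y) (ν * w1 0 y) 0 :=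
      (hd1 0 y hy).const_mul ν
    have := h1.unique h2
    simpa using this
  -- the three integral functions
  set F : ℝ → ℂ := fun s => ∫ x in (0:ℝ)..L, w x s * c x with hFdef
  set F₁ : ℝ → ℂ := fun s => ∫ x in (0:ℝ)..L, w2 x s * c x with hF₁def
  set F₂ : ℝ → ℂ := fun s => ∫ x in (0:ℝ)..L, w22 x s * c x with hF₂def
  have hF' : ∀ s : ℝ, M₀ < s → HasDerivAt F (F₁ s) s := fun s hs =>
    paramDeriv hL w w2 hwC hw2C hd2 c hc_cont hs
  have hF₁' : ∀ s : ℝ, M₀ < s → HasDerivAt F₁ (F₂ s) s := fun s hs =>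
    paramDeriv hL w2 w22 hw2C hw22C hd22 c hc_cont hs
  -- the ODE : F₂ = (l² - k²) F
  have ha2 : a ^ 2 = -((l:ℂ) ^ 2) := by
    have hI2 : Complex.I ^ 2 = -1 := Complex.I_sq
    rw [hadef]
    linear_combination (l:ℂ) ^ 2 * hI2
  have hODE : ∀ s : ℝ, M₀ < s → F₂ s = ((l:ℂ) ^ 2 - (k:ℂ) ^ 2) * F s := by
    intro s hs
    have hI1 : IntervalIntegrable (fun x => w11 x s * c x) volume 0 L :=
      ((contX w11 hw11C hs).mul hc_cont).intervalIntegrable 0 L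
    have hI2 : IntervalIntegrable (fun x => w1 x s * (a * c x)) volume 0 L :=
      ((contX w1 hw1C hs).mul (continuous_const.mul hc_cont)).intervalIntegrable 0 L
    have hI3 : IntervalIntegrable (fun x => w x s * (a * (a * c x))) volume 0 L :=
      ((contX w hwC hs).mul
        (continuous_const.mul (continuous_const.mul hc_cont))).intervalIntegrable 0 L
    have hJ1 : IntervalIntegrable (fun x => w11 x s) volume 0 L :=
      (contX w11 hw11C hs).intervalIntegrable 0 L
    have hJ2 : IntervalIntegrable (fun x => w1 x s) volume 0 L :=
      (contX w1 hw1C hs).intervalIntegrable 0 L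
    have hJc : IntervalIntegrable (fun x => a * c x) volume 0 L :=
      (continuous_const.mul hc_cont).intervalIntegrable 0 L
    have hJcc : IntervalIntegrable (fun x => a * (a * c x)) volume 0 L :=
      (continuous_const.mul (continuous_const.mul hc_cont)).intervalIntegrable 0 L
    have hI4 : IntervalIntegrable (fun x => w x s * c x) volume 0 L :=
      ((contX w hwC hs).mul hc_cont).intervalIntegrable 0 L
    have hI5 : IntervalIntegrable (fun x => w22 x s * c x) volume 0 L :=
      ((contX w22 hw22C hs).mul hc_cont).intervalIntegrable 0 L
    -- first integration by parts
    have II1 : (∫ x in (0:ℝ)..L, (w11 x s * c x + w1 x s * (a * c x))) =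
        w1 L s * c L - w1 0 s * c 0 :=
      intervalIntegral.integral_deriv_mul_eq_sub
        (u := fun x => w1 x s) (v := c) (u' := fun x => w11 x s) (v' := fun x => a * c x)
        (fun x _ => hd11 x s hs) (fun x _ => hc_deriv x) hJ1 hJc
    have hb1 : w1 L s * c L - w1 0 s * c 0 = 0 := by
      rw [hqpw1 s hs]; linear_combination w1 0 s * hcL
    rw [intervalIntegral.integral_add hI1 hI2, hb1] at II1
    -- second integration by parts
    have II2 : (∫ x in (0:ℝ)..L, (w1 x s * (a * c x) + w x s * (a * (a * c x)))) =
        w L s * (a * c L) - w 0 s * (a * c 0) :=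
      intervalIntegral.integral_deriv_mul_eq_sub
        (u := fun x => w x s) (v := fun x => a * c x)
        (u' := fun x => w1 x s) (v' := fun x => a * (a * c x))
        (fun x _ => hd1 x s hs) (fun x _ => (hc_deriv x).const_mul a) hJ2 hJcc
    have hb2 : w L s * (a * c L) - w 0 s * (a * c 0) = 0 := by
      rw [hqpw s hs]; linear_combination a * w 0 s * hcL
    rw [intervalIntegral.integral_add hI2 hI3, hb2] at II2
    -- the second derivative term
    have hconst : (∫ x in (0:ℝ)..L, w x s * (a * (a * c x)))
        = a ^ 2 * ∫ x in (0:ℝ)..L, w x s * c x := by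
      rw [← intervalIntegral.integral_const_mul]
      exact intervalIntegral.integral_congr (fun x _ => by ring)
    have hw11int : (∫ x in (0:ℝ)..L, w11 x s * c x) = -((l:ℂ) ^ 2) * F s := by
      rw [hFdef]
      have e1 : (∫ x in (0:ℝ)..L, w11 x s * c x)
          = - ∫ x in (0:ℝ)..L, w1 x s * (a * c x) := by linear_combination II1
      have e2 : (∫ x in (0:ℝ)..L, w1 x s * (a * c x))
          = - ∫ x in (0:ℝ)..L, w x s * (a * (a * c x)) := by linear_combination II2
      rw [e1, e2, hconst, ha2]
      ring
    -- use the Helmholtz equation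
    have hcongr : (∫ x in (0:ℝ)..L, w22 x s * c x)
        = ∫ x in (0:ℝ)..L, (-(w11 x s * c x) + (-((k:ℂ)^2)) * (w x s * c x)) := by
      apply intervalIntegral.integral_congr
      intro x _
      have := helm x s hs
      linear_combination c x * this
    have hsplit : (∫ x in (0:ℝ)..L, (-(w11 x s * c x) + (-((k:ℂ)^2)) * (w x s * c x)))
        = -(∫ x in (0:ℝ)..L, w11 x s * c x) + (-((k:ℂ)^2)) * ∫ x in (0:ℝ)..L, w x s * c x := by
      have hIneg : IntervalIntegrable (fun x => -(w11 x s * c x)) volume 0 L := hI1.neg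
      have hIK : IntervalIntegrable (fun x => (-((k:ℂ)^2)) * (w x s * c x)) volume 0 L :=
        hI4.const_mul _
      rw [intervalIntegral.integral_add hIneg hIK,
        intervalIntegral.integral_neg, intervalIntegral.integral_const_mul]
    rw [hF₂def]
    simp only []
    rw [hcongr, hsplit, hw11int]
    rw [hFdef]
    ring
  

  -- representation F t = C₁ exp(-(Iβ)t) + C₂ exp((Iβ)t)
  obtain ⟨C₁, C₂, hrep⟩ : ∃ C₁ C₂ : ℂ, ∀ t : ℝ, M₀ < t →
      F t = C₁ * Complex.exp (-(Complex.I * β) * t) + C₂ * Complex.exp ((Complex.I * β) * t) := by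
    set b : ℂ := Complex.I * β with hbdef
    have hb0 : b ≠ 0 := by
      rw [hbdef]
      exact mul_ne_zero Complex.I_ne_zero (by exact_mod_cast hβ.ne')
    have hb2 : b * b = (l:ℂ) ^ 2 - (k:ℂ) ^ 2 := by
      have hI2 : Complex.I ^ 2 = -1 := Complex.I_sq
      have hcast : ((β : ℝ) : ℂ) ^ 2 = (k:ℂ) ^ 2 - (l:ℂ) ^ 2 := by
        have := congrArg (Complex.ofReal) hβ2
        push_cast at this
        exact_mod_cast this
      rw [hbdef]
      linear_combination ((β : ℝ) : ℂ) ^ 2 * hI2 - hcast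
    set g : ℝ → ℂ := fun t => (F₁ t + b * F t) * Complex.exp (-b * t) with hgdef
    have hg' : ∀ t : ℝ, M₀ < t → HasDerivAt g 0 t := by
      intro t ht
      have h1 : HasDerivAt (fun t => F₁ t + b * F t) (F₂ t + b * F₁ t) t :=
        (hF₁' t ht).add ((hF' t ht).const_mul b)
      have h3 := h1.mul (expDeriv (-b) t)
      have hval : (F₂ t + b * F₁ t) * Complex.exp (-b * t)
          + (F₁ t + b * F t) * (-b * Complex.exp (-b * t)) = 0 := by
        rw [hODE t ht]
        linear_combination (-(F t * Complex.exp (-b * t))) * hb2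
      rw [hval] at h3
      exact h3
    set D : ℂ := g (M₀ + 1) with hDdef
    have hgc : ∀ t : ℝ, M₀ < t → g t = D := fun t ht => constOn g hg' ht (by linarith)
    set h2f : ℝ → ℂ :=
      fun t => F t * Complex.exp (b * t) - D * Complex.exp (2 * b * t) / (2 * b) with hh2def
    have hexpadd : ∀ t : ℝ, Complex.exp (-b * t) * Complex.exp (b * t) = 1 := by
      intro t
      rw [← Complex.exp_add, show -b * (t:ℂ) + b * t = 0 by ring, Complex.exp_zero]
    have he2 : ∀ t : ℝ, Complex.exp (2 * b * t)
        = Complex.exp (b * t) * Complex.exp (b * t) := by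
      intro t
      rw [← Complex.exp_add, show (b : ℂ) * (t:ℂ) + b * t = 2 * b * t by ring]
    have hh2' : ∀ t : ℝ, M₀ < t → HasDerivAt h2f 0 t := by
      intro t ht
      have p1 := (hF' t ht).mul (expDeriv b t)
      have p2 := ((expDeriv (2 * b) t).const_mul D).div_const (2 * b)
      have p3 := p1.sub p2
      have hFb' : F₁ t + b * F t = D * Complex.exp (b * t) := by
        have hgt := hgc t ht
        rw [hgdef] at hgt
        simp only [] at hgt
        calc F₁ t + b * F t
            = ((F₁ t + b * F t) * Complex.exp (-b * t)) * Complex.exp (b * t) := by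
              rw [mul_assoc (F₁ t + b * F t) (Complex.exp (-b * ↑t)) (Complex.exp (b * ↑t)),
                hexpadd, mul_one]
          _ = D * Complex.exp (b * t) := by rw [hgt]
      have h2b : (2 : ℂ) * b ≠ 0 := mul_ne_zero two_ne_zero hb0
      have hval : F₁ t * Complex.exp (b * t) + F t * (b * Complex.exp (b * t))
          - D * (2 * b * Complex.exp (2 * b * t)) / (2 * b) = 0 := by
        rw [show D * (2 * b * Complex.exp (2 * b * t)) = (2 * b) * (D * Complex.exp (2 * b * t))
          by ring, mul_div_cancel_left₀ _ h2b, he2]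
        linear_combination Complex.exp (b * t) * hFb'
      rw [hval] at p3
      exact p3
    set E : ℂ := h2f (M₀ + 1) with hEdef
    have hh2c : ∀ t : ℝ, M₀ < t → h2f t = E := fun t ht => constOn h2f hh2' ht (by linarith)
    refine ⟨E, D / (2 * b), fun t ht => ?_⟩
    have h4 := hh2c t ht
    rw [hh2def] at h4
    simp only [] at h4
    have hxe : Complex.exp ((Complex.I * β) * t) = Complex.exp (b * t) := by rw [hbdef]
    have hxe' : Complex.exp (-(Complex.I * β) * t) = Complex.exp (-b * t) := by rw [hbdef]
    rw [hxe, hxe']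
    have hene : Complex.exp (b * (t:ℂ)) ≠ 0 := Complex.exp_ne_zero _
    apply mul_right_cancel₀ hene
    calc F t * Complex.exp (b * (t:ℂ))
        = E + D * Complex.exp (2 * b * t) / (2 * b) := by linear_combination h4
      _ = E * (Complex.exp (-b * (t:ℂ)) * Complex.exp (b * (t:ℂ)))
          + D * (Complex.exp (b * (t:ℂ)) * Complex.exp (b * (t:ℂ))) / (2 * b) := by
            rw [hexpadd, mul_one, ← he2]
      _ = (E * Complex.exp (-b * (t:ℂ)) + D / (2 * b) * Complex.exp (b * (t:ℂ)))
          * Complex.exp (b * (t:ℂ)) := by ring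
  -- periodicity
  set T : ℝ := 2 * Real.pi / β with hTdef
  have hT : 0 < T := by positivity
  have hβc : ((β:ℝ):ℂ) ≠ 0 := by exact_mod_cast hβ.ne'
  have hper : ∀ t : ℝ, M₀ < t → ∀ n : ℕ, F (t + n * T) = F t := by
    intro t ht n
    have hnT : (0:ℝ) ≤ n * T := by positivity
    have htn : M₀ < t + n * T := by linarith
    rw [hrep _ htn, hrep t ht]
    have h1 : (-(Complex.I * β) : ℂ) * ((t + n * T : ℝ) : ℂ)
        = -(Complex.I * β) * t + ((-(n:ℤ) : ℤ) : ℂ) * (2 * (Real.pi:ℂ) * Complex.I) := by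
      rw [hTdef]
      push_cast
      field_simp
      ring
    have h2 : ((Complex.I * β) : ℂ) * ((t + n * T : ℝ) : ℂ)
        = (Complex.I * β) * t + (((n:ℤ) : ℤ) : ℂ) * (2 * (Real.pi:ℂ) * Complex.I) := by
      rw [hTdef]
      push_cast
      field_simp
    rw [h1, h2, Complex.exp_add, Complex.exp_add, Complex.exp_int_mul_two_pi_mul_I,
      Complex.exp_int_mul_two_pi_mul_I, mul_one, mul_one]
  -- integrable majorant
  set gsq : ℝ → ℝ := fun t => ∫ x in (0:ℝ)..L, ‖w x t‖ ^ 2 with hgsqdef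
  have hgsq_int : IntegrableOn gsq (Set.Ioi M₀) := by
    have h0 := hL2
    rw [IntegrableOn, Measure.volume_eq_prod, ← Measure.prod_restrict] at h0
    have h1 := h0.integral_prod_right
    have heq : gsq = fun t => ∫ x, ‖w x t‖ ^ 2 ∂(volume.restrict (Set.Ioo 0 L)) := by
      funext t
      rw [hgsqdef]
      simp only []
      rw [intervalIntegral.integral_of_le hL.le, MeasureTheory.integral_Ioc_eq_integral_Ioo]
    rw [IntegrableOn, heq]
    exact h1
  have hgsq_nonneg : ∀ t : ℝ, 0 ≤ gsq t :=
    fun t => intervalIntegral.integral_nonneg hL.le (fun x _ => sq_nonneg _)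
  have hFb : ∀ t : ℝ, M₀ < t → ∀ e : ℝ, 0 < e →
      ‖F t‖ ≤ (e ^ 2 * gsq t + 1 / e ^ 2) / 2 := by
    intro t ht e he
    have hwcont : Continuous fun x => w x t := contX w hwC ht
    have hIa : IntervalIntegrable (fun x => ‖w x t‖ * (1 / Real.sqrt L)) volume 0 L :=
      (hwcont.norm.mul continuous_const).intervalIntegrable 0 L
    have hIb : IntervalIntegrable
        (fun x => (e ^ 2 * ‖w x t‖ ^ 2 + 1 / (e ^ 2 * L)) / 2) volume 0 L := by
      apply Continuous.intervalIntegrable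
      exact ((continuous_const.mul ((hwcont.norm).pow 2)).add continuous_const).div_const 2
    have Ih1 : IntervalIntegrable (fun x => e ^ 2 * ‖w x t‖ ^ 2) volume 0 L :=
      (continuous_const.mul ((hwcont.norm).pow 2)).intervalIntegrable 0 L
    calc ‖F t‖ ≤ ∫ x in (0:ℝ)..L, ‖w x t * c x‖ := by
          rw [hFdef]
          exact intervalIntegral.norm_integral_le_integral_norm hL.le
      _ = ∫ x in (0:ℝ)..L, ‖w x t‖ * (1 / Real.sqrt L) :=
          intervalIntegral.integral_congr (fun x _ => by rw [norm_mul, hcnorm])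
      _ ≤ ∫ x in (0:ℝ)..L, (e ^ 2 * ‖w x t‖ ^ 2 + 1 / (e ^ 2 * L)) / 2 := by
          apply intervalIntegral.integral_mono_on hL.le hIa hIb
          intro x _
          have hs2 : Real.sqrt L ^ 2 = L := Real.sq_sqrt hL.le
          have hkey : 0 ≤ (e * ‖w x t‖ - 1 / (e * Real.sqrt L)) ^ 2 := sq_nonneg _
          have hexp : (e * ‖w x t‖ - 1 / (e * Real.sqrt L)) ^ 2
              = e ^ 2 * ‖w x t‖ ^ 2 - 2 * (‖w x t‖ * (1 / Real.sqrt L)) + 1 / (e ^ 2 * L) := by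
            rw [← hs2]
            field_simp
            linear_combination (-1 : ℝ) * Real.sq_sqrt (sq_nonneg (Real.sqrt L))
          rw [hexp] at hkey
          linarith
      _ = (e ^ 2 * gsq t + 1 / e ^ 2) / 2 := by
          rw [intervalIntegral.integral_div, intervalIntegral.integral_add Ih1
            intervalIntegrable_const, intervalIntegral.integral_const_mul,
            intervalIntegral.integral_const, hgsqdef]
          simp only [smul_eq_mul, sub_zero]
          field_simp
  -- final argument
  intro y₀ hy₀
  have key : F y₀ = 0 := by
    have hFII : ∀ p q : ℝ, M₀ < p → p ≤ q →
        IntervalIntegrable (fun t => ‖F t‖) volume p q := by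
      intro p q hp hpq
      apply ContinuousOn.intervalIntegrable
      intro t htm
      rw [Set.uIcc_of_le hpq] at htm
      exact ((hF' t (lt_of_lt_of_le hp htm.1)).continuousAt.norm).continuousWithinAt
    have hgII : ∀ p q : ℝ, M₀ < p → p ≤ q → IntervalIntegrable gsq volume p q := by
      intro p q hp hpq
      rw [intervalIntegrable_iff, Set.uIoc_of_le hpq]
      exact hgsq_int.mono_set (fun t ht1 => lt_trans hp ht1.1)
    set cF : ℝ := ∫ t in y₀..(y₀ + T), ‖F t‖ with hcFdef
    have hcF0 : 0 ≤ cF :=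
      intervalIntegral.integral_nonneg (by linarith) (fun _ _ => norm_nonneg _)
    have hperInt : ∀ n : ℕ, (∫ t in (y₀ + n * T)..(y₀ + n * T + T), ‖F t‖) = cF := by
      intro n
      have h1 : (∫ t in (y₀ + n * T)..(y₀ + n * T + T), ‖F t‖)
          = ∫ t in y₀..(y₀ + T), ‖F (t + n * T)‖ := by
        rw [intervalIntegral.integral_comp_add_right (fun t => ‖F t‖) ((n:ℝ) * T)]
        congr 1 <;> ring
      rw [h1, hcFdef]
      apply intervalIntegral.integral_congr
      intro t htm
      rw [Set.uIcc_of_le (by linarith : y₀ ≤ y₀ + T)] at htm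
      show ‖F (t + n * T)‖ = ‖F t‖
      rw [hper t (lt_of_lt_of_le hy₀ htm.1) n]
    have hGlow : ∀ δ : ℝ, 0 < δ →
        ∃ n : ℕ, (∫ t in (y₀ + n * T)..(y₀ + n * T + T), gsq t) ≤ δ := by
      intro δ hδ
      by_contra hcon
      push_neg at hcon
      obtain ⟨N, hN⟩ := exists_nat_gt ((∫ t in Set.Ioi M₀, gsq t) / δ)
      have hsum := intervalIntegral.sum_integral_adjacent_intervals (f := gsq) (μ := volume)
        (a := fun m : ℕ => y₀ + (m:ℝ) * T) (n := N) (fun m _ =>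
          hgII (y₀ + (m:ℝ) * T) (y₀ + ((m + 1 : ℕ) : ℝ) * T)
            (by
              have h1 : (0:ℝ) ≤ (m:ℝ) * T := by positivity
              linarith)
            (by
              push_cast
              nlinarith [hT.le]))
      have hterm : ∀ m ∈ Finset.range N, δ ≤
          ∫ t in (y₀ + (m:ℝ) * T)..(y₀ + ((m:ℕ) + 1 : ℕ) * T), gsq t := by
        intro m _
        have hEP : y₀ + (((m:ℕ) + 1 : ℕ) : ℝ) * T = y₀ + (m:ℝ) * T + T := by push_cast; ring
        rw [hEP]
        exact (hcon m).le
      have hNδ : (N:ℝ) * δ ≤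
          ∑ m ∈ Finset.range N, ∫ t in (y₀ + (m:ℝ) * T)..(y₀ + ((m:ℕ) + 1 : ℕ) * T), gsq t := by
        have := Finset.card_nsmul_le_sum (Finset.range N) _ δ hterm
        simpa [Finset.card_range, nsmul_eq_mul] using this
      have hNy : y₀ ≤ y₀ + (N:ℝ) * T := by
        have : (0:ℝ) ≤ (N:ℝ) * T := by positivity
        linarith
      have hup2 : (∫ t in y₀..(y₀ + (N:ℝ) * T), gsq t) ≤ ∫ t in Set.Ioi M₀, gsq t := by
        rw [intervalIntegral.integral_of_le hNy]
        apply setIntegral_mono_set hgsq_int (MeasureTheory.ae_of_all _ hgsq_nonneg)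
        exact HasSubset.Subset.eventuallyLE (fun t ht1 => lt_trans hy₀ ht1.1)
      have htot : (∫ t in Set.Ioi M₀, gsq t) < (N:ℝ) * δ := by
        rw [div_lt_iff₀ hδ] at hN
        linarith
      rw [hsum] at hNδ
      simp only [Nat.cast_zero, zero_mul, add_zero] at hNδ
      linarith
    have hcF3 : ∀ e : ℝ, 0 < e → ∀ n : ℕ,
        cF ≤ (e ^ 2 * (∫ t in (y₀ + n * T)..(y₀ + n * T + T), gsq t) + T / e ^ 2) / 2 := by
      intro e he n
      have hnT0 : (0:ℝ) ≤ (n:ℝ) * T := by positivity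
      have hy₀n : M₀ < y₀ + n * T := by linarith
      have hle : y₀ + (n:ℝ) * T ≤ y₀ + n * T + T := by linarith
      rw [← hperInt n]
      calc (∫ t in (y₀ + (n:ℝ) * T)..(y₀ + n * T + T), ‖F t‖)
          ≤ ∫ t in (y₀ + (n:ℝ) * T)..(y₀ + n * T + T), (e ^ 2 * gsq t + 1 / e ^ 2) / 2 := by
            apply intervalIntegral.integral_mono_on hle (hFII _ _ hy₀n hle)
              ((((hgII _ _ hy₀n hle).const_mul (e ^ 2)).add intervalIntegrable_const).div_const 2)
            intro t htm
            exact hFb t (lt_of_lt_of_le hy₀n htm.1) e he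
        _ = (e ^ 2 * (∫ t in (y₀ + (n:ℝ) * T)..(y₀ + n * T + T), gsq t) + T / e ^ 2) / 2 := by
            rw [intervalIntegral.integral_div, intervalIntegral.integral_add
              ((hgII _ _ hy₀n hle).const_mul (e ^ 2)) intervalIntegrable_const,
              intervalIntegral.integral_const_mul, intervalIntegral.integral_const,
              show y₀ + (n:ℝ) * T + T - (y₀ + (n:ℝ) * T) = T by ring, smul_eq_mul]
            ring
    have hcFz : cF = 0 := by
      rcases eq_or_lt_of_le hcF0 with h | hpos
      · exact h.symm
      exfalso
      set e : ℝ := max 1 ((1 + T) / cF) with hedef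
      have he1 : (1:ℝ) ≤ e := le_max_left _ _
      have he0 : 0 < e := lt_of_lt_of_le one_pos he1
      obtain ⟨n, hn⟩ := hGlow (1 / e ^ 4) (by positivity)
      have h3 := hcF3 e he0 n
      have h4 : cF ≤ (e ^ 2 * (1 / e ^ 4) + T / e ^ 2) / 2 := by
        refine le_trans h3 ?_
        gcongr
      have h5 : e ^ 2 * (1 / e ^ 4) = 1 / e ^ 2 := by
        field_simp
      have h6 : (1 + T) / cF ≤ e := le_max_right _ _
      have h7 : 1 + T ≤ e * cF := (div_le_iff₀ hpos).1 h6
      have h8 : cF * (2 * e ^ 2) ≤ 1 + T := by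
        rw [h5] at h4
        have heq9 : (1 / e ^ 2 + T / e ^ 2) / 2 = (1 + T) / (2 * e ^ 2) := by
          rw [← add_div, div_div, mul_comm (e ^ 2) 2]
        rw [heq9] at h4
        exact (le_div_iff₀ (by positivity)).1 h4
      have he2 : e ≤ e ^ 2 := by
        have h10 := mul_le_mul_of_nonneg_left he1 (le_trans zero_le_one he1)
        calc e = e * 1 := (mul_one e).symm
          _ ≤ e * e := h10
          _ = e ^ 2 := (sq e).symm
      have hA : e * cF ≤ e ^ 2 * cF := mul_le_mul_of_nonneg_right he2 hpos.le
      have hB : 0 < e ^ 2 * cF := by positivity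
      have hchain : 2 * (e ^ 2 * cF) ≤ e ^ 2 * cF := by
        calc 2 * (e ^ 2 * cF) = cF * (2 * e ^ 2) := by ring
          _ ≤ 1 + T := h8
          _ ≤ e * cF := h7
          _ ≤ e ^ 2 * cF := hA
      linarith [hB, hchain]
    by_contra hF0
    have hr : 0 < ‖F y₀‖ := norm_pos_iff.2 hF0
    have htend : Filter.Tendsto (fun t => ‖F t‖) (nhds y₀) (nhds ‖F y₀‖) :=
      ((hF' y₀ hy₀).continuousAt.norm)
    have hev : ∀ᶠ t in nhds y₀, ‖F y₀‖ / 2 < ‖F t‖ :=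
      htend.eventually (eventually_gt_nhds (by linarith))
    rw [Metric.eventually_nhds_iff] at hev
    obtain ⟨δ, hδ0, hδ⟩ := hev
    set δ' : ℝ := min (δ / 2) T with hδ'def
    have hδ'0 : 0 < δ' := lt_min (by linarith) hT
    have hδ'T : δ' ≤ T := min_le_right _ _
    have hδ'δ : δ' < δ := lt_of_le_of_lt (min_le_left _ _) (by linarith)
    have hpt : ∀ t ∈ Set.Icc y₀ (y₀ + δ'), ‖F y₀‖ / 2 ≤ ‖F t‖ := by
      intro t htm
      refine le_of_lt (hδ ?_)
      rw [Real.dist_eq, abs_lt]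
      constructor
      · linarith [htm.1]
      · linarith [htm.2]
    have hmono := intervalIntegral.integral_mono_on (by linarith : y₀ ≤ y₀ + δ')
      (intervalIntegrable_const (c := ‖F y₀‖ / 2)) (hFII y₀ (y₀ + δ') hy₀ (by linarith)) hpt
    rw [intervalIntegral.integral_const, smul_eq_mul] at hmono
    have hup : (∫ t in y₀..(y₀ + δ'), ‖F t‖) ≤ cF := by
      rw [hcFdef]
      exact intervalIntegral.integral_mono_interval le_rfl (by linarith) (by linarith)
        (MeasureTheory.ae_of_all _ (fun t => norm_nonneg _)) (hFII y₀ (y₀ + T) hy₀ (by linarith))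
    rw [hcFz] at hup
    nlinarith [mul_pos (half_pos hr) hδ'0, hmono, hup]
  calc (∫ x in (0:ℝ)..L, w x y₀ * (starRingEnd ℂ) (φ j x))
      = ∫ x in (0:ℝ)..L, w x y₀ * c x :=
        intervalIntegral.integral_congr (fun x _ => by rw [hcφ])
    _ = 0 := key
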